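/- Let q : W × W → [0,∞) be an irreducible kernel on a finite set W of size n with positive reversible measure λ, and let F = {ρ ∈ [0,1]^W : ρ_i(1-ρ_j)q(i,j) = ρ_j(1-ρ_i)q(j,i) for all i,j}. Then the map ψ : F → [0,n], ψ(ρ) = Σ_{i∈W} ρ_i, is a bijection, and for each i ∈ W the function ρ ↦ (ψ^{-1}(ρ))_i is continuous and nondecreasing on [0,n]. -/

import Mathlib

theorem equilibrium_manifold_parametrization
    {W : Type*} [Fintype W] (q : W → W → ℝ) (hq : ∀ i j, 0 ≤ q i j)
    (hirr : ∀ i j : W, Relation.ReflTransGen (fun a b => 0 < q a b) i j)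
    (lam : W → ℝ) (hlam : ∀ i, 0 < lam i)
    (hrev : ∀ i j, lam i * q i j = lam j * q j i) :
    let n : ℕ := Fintype.card W
    let Feq : Set (W → ℝ) :=
      {ρ | (∀ i, ρ i ∈ Set.Icc (0:ℝ) 1) ∧
        ∀ i j, ρ i * (1 - ρ j) * q i j = ρ j * (1 - ρ i) * q j i}
    Set.BijOn (fun ρ : W → ℝ => ∑ i, ρ i) Feq (Set.Icc 0 (n : ℝ)) ∧
    ∃ Φ : ℝ → W → ℝ,
      (∀ k ∈ Set.Icc (0:ℝ) (n : ℝ), Φ k ∈ Feq ∧ ∑ i, Φ k i = k) ∧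
      ∀ i, ContinuousOn (fun k => Φ k i) (Set.Icc 0 (n : ℝ)) ∧
        MonotoneOn (fun k => Φ k i) (Set.Icc 0 (n : ℝ)) := by
  intro n Feq
  classical
  rcases isEmpty_or_nonempty W with hW | hW
  · -- empty case
    have hn : (n : ℝ) = 0 := by
      simp [n, Fintype.card_eq_zero]
    constructor
    · refine ⟨?_, ?_, ?_⟩
      · intro ρ _
        simp [hn]
      · intro ρ _ σ _ _
        funext i
        exact (hW.false i).elim
      · intro k hk
        rw [hn] at hk
        have hk0 : k = 0 := le_antisymm hk.2 hk.1
        refine ⟨fun _ => 0, ⟨fun i => (hW.false i).elim, fun i => (hW.false i).elim⟩, ?_⟩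
        simp [hk0]
    · refine ⟨fun _ _ => 0, ?_, ?_⟩
      · intro k hk
        rw [hn] at hk
        have hk0 : k = 0 := le_antisymm hk.2 hk.1
        exact ⟨⟨fun i => (hW.false i).elim, fun i => (hW.false i).elim⟩, by simp [hk0]⟩
      · intro i
        exact (hW.false i).elim
  -- nonempty case
  set r : ℝ → W → ℝ := fun t i => t * lam i / (1 - t + t * lam i) with hrdef
  have hden : ∀ t ∈ Set.Icc (0:ℝ) 1, ∀ i, 0 < 1 - t + t * lam i := by
    rintro t ⟨ht0, ht1⟩ i
    rcases lt_or_eq_of_le ht1 with h | h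
    · nlinarith [mul_nonneg ht0 (hlam i).le]
    · rw [h]
      linarith [hlam i]
  have hr01 : ∀ t ∈ Set.Icc (0:ℝ) 1, ∀ i, r t i ∈ Set.Icc (0:ℝ) 1 := by
    rintro t ht i
    have hd := hden t ht i
    constructor
    · exact div_nonneg (mul_nonneg ht.1 (hlam i).le) hd.le
    · rw [div_le_one hd]
      nlinarith [ht.2]
  have hrFeq : ∀ t ∈ Set.Icc (0:ℝ) 1, r t ∈ Feq := by
    intro t ht
    refine ⟨fun i => hr01 t ht i, ?_⟩
    intro i j
    have hdi := hden t ht i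
    have hdj := hden t ht j
    have h1 : ∀ k : W, (1:ℝ) - r t k = (1 - t) / (1 - t + t * lam k) := by
      intro k
      have hd := (hden t ht k).ne'
      simp only [hrdef]
      rw [eq_div_iff hd, sub_mul, one_mul, div_mul_cancel₀ _ hd]
      ring
    rw [h1 i, h1 j]
    simp only [hrdef]
    rw [div_mul_div_comm, div_mul_div_comm, div_mul_eq_mul_div, div_mul_eq_mul_div,
      div_eq_div_iff (mul_pos hdi hdj).ne' (mul_pos hdj hdi).ne']
    linear_combination (t * (1 - t) * ((1 - t + t * lam i) * (1 - t + t * lam j))) * hrev i j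
  have hrmono : ∀ i, ∀ s ∈ Set.Icc (0:ℝ) 1, ∀ t ∈ Set.Icc (0:ℝ) 1, s < t → r s i < r t i := by
    intro i s hs t ht hst
    have hds := hden s hs i
    have hdt := hden t ht i
    simp only [hrdef]
    rw [div_lt_div_iff₀ hds hdt]
    nlinarith [mul_lt_mul_of_pos_right hst (hlam i)]
  set g : ℝ → ℝ := fun t => ∑ i, r t i with hgdef
  have hg0 : g 0 = 0 := by simp [hgdef, hrdef]
  have hg1 : g 1 = (n : ℝ) := by
    have : ∀ i : W, r 1 i = 1 := by
      intro i
      simp only [hrdef]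
      rw [div_eq_one_iff_eq (by nlinarith [hlam i])]
      ring
    simp [hgdef, this, n, Finset.card_univ]
  have hgmono : StrictMonoOn g (Set.Icc (0:ℝ) 1) := by
    intro s hs t ht hst
    exact Finset.sum_lt_sum_of_nonempty Finset.univ_nonempty
      (fun i _ => hrmono i s hs t ht hst)
  have hrcont : ∀ i, ContinuousOn (fun t => r t i) (Set.Icc (0:ℝ) 1) := by
    intro i
    simp only [hrdef]
    apply ContinuousOn.div
    · exact (continuous_id.mul continuous_const).continuousOn
    · exact ((continuous_const.sub continuous_id).add
        (continuous_id.mul continuous_const)).continuousOn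
    · exact fun t ht => (hden t ht i).ne'
  have hgcont : ContinuousOn g (Set.Icc (0:ℝ) 1) := by
    apply continuousOn_finset_sum
    intro i _
    exact hrcont i
  have hgmem : ∀ t ∈ Set.Icc (0:ℝ) 1, g t ∈ Set.Icc (0:ℝ) (n:ℝ) := by
    intro t ht
    constructor
    · rw [← hg0]
      rcases eq_or_lt_of_le ht.1 with h | h
      · rw [h]
      · exact (hgmono (Set.left_mem_Icc.2 zero_le_one) ht h).le
    · rw [← hg1]
      rcases eq_or_lt_of_le ht.2 with h | h
      · rw [h]
      · exact (hgmono ht (Set.right_mem_Icc.2 zero_le_one) h).le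
  have hsurj : Set.Icc (0:ℝ) (n:ℝ) ⊆ g '' Set.Icc (0:ℝ) 1 := by
    have := intermediate_value_Icc (zero_le_one (α := ℝ)) hgcont
    rwa [hg0, hg1] at this
  -- the order isomorphism
  set G : Set.Icc (0:ℝ) 1 → Set.Icc (0:ℝ) (n:ℝ) :=
    fun x => ⟨g x, hgmem x x.2⟩ with hGdef
  have hGstrict : StrictMono G := by
    intro a b hab
    exact Subtype.mk_lt_mk.2 (hgmono a.2 b.2 hab)
  have hGsurj : Function.Surjective G := by
    intro y
    obtain ⟨x, hx, hgx⟩ := hsurj y.2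
    exact ⟨⟨x, hx⟩, Subtype.ext hgx⟩
  set e : Set.Icc (0:ℝ) 1 ≃o Set.Icc (0:ℝ) (n:ℝ) :=
    StrictMono.orderIsoOfSurjective G hGstrict hGsurj with hedef
  have hge : ∀ y : Set.Icc (0:ℝ) (n:ℝ), g (e.symm y) = y := by
    intro y
    have := StrictMono.orderIsoOfSurjective_self_symm_apply G hGstrict hGsurj y
    exact congrArg Subtype.val this
  -- classification of equilibria
  have hedge : ∀ ρ ∈ Feq, ∀ i j, 0 < q i j →
      ρ i * (1 - ρ j) * lam j = ρ j * (1 - ρ i) * lam i := by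
    rintro ρ ⟨hb, hdb⟩ i j hij
    apply mul_right_cancel₀ (ne_of_gt hij)
    linear_combination lam j * hdb i j - ρ j * (1 - ρ i) * hrev i j
  have hglob : ∀ ρ ∈ Feq, ∀ i j,
      ρ i * (1 - ρ j) * lam j = ρ j * (1 - ρ i) * lam i := by
    intro ρ hρ i j
    have hb := hρ.1
    induction hirr i j with
    | refl => ring
    | @tail b c hab hbc ih =>
      have he := hedge ρ hρ b c hbc
      rcases eq_or_lt_of_le (hb b).1 with h0 | h0
      · have hρi : ρ i = 0 := by
          have h := ih
          rw [← h0] at h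
          have : ρ i * lam b = 0 := by linarith [h]
          rcases mul_eq_zero.1 this with h' | h'
          · exact h'
          · exact absurd h' (hlam b).ne'
        have hρc : ρ c = 0 := by
          rw [← h0] at he
          have : ρ c * lam b = 0 := by linarith [he]
          rcases mul_eq_zero.1 this with h' | h'
          · exact h'
          · exact absurd h' (hlam b).ne'
        simp [hρi, hρc]
      rcases eq_or_lt_of_le (hb b).2 with h1 | h1
      · have hρi : ρ i = 1 := by
          have h := ih
          rw [h1] at h
          have : (1 - ρ i) * lam i = 0 := by nlinarith [h]
          rcases mul_eq_zero.1 this with h' | h'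
          · linarith
          · exact absurd h' (hlam i).ne'
        have hρc : ρ c = 1 := by
          rw [h1] at he
          have : (1 - ρ c) * lam c = 0 := by nlinarith [he]
          rcases mul_eq_zero.1 this with h' | h'
          · linarith
          · exact absurd h' (hlam c).ne'
        simp [hρi, hρc]
      · have hM : ρ b * (1 - ρ b) * lam b ≠ 0 := by
          have : 0 < ρ b * (1 - ρ b) * lam b := by
            apply mul_pos (mul_pos h0 (by linarith)) (hlam b)
          exact this.ne'
        apply mul_left_cancel₀ hM
        linear_combination (ρ i * (1 - ρ b) * lam b) * he + (ρ c * (1 - ρ b) * lam b) * ih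
  have hclass : ∀ ρ ∈ Feq, ∃ t ∈ Set.Icc (0:ℝ) 1, ρ = r t := by
    intro ρ hρ
    have hb := hρ.1
    have hE := hglob ρ hρ
    by_cases h0 : ∀ i, ρ i = 0
    · refine ⟨0, Set.left_mem_Icc.2 zero_le_one, funext fun i => ?_⟩
      simp [hrdef, h0 i]
    push_neg at h0
    obtain ⟨i0, hi0⟩ := h0
    have hpos : 0 < ρ i0 := lt_of_le_of_ne (hb i0).1 (Ne.symm hi0)
    rcases eq_or_lt_of_le (hb i0).2 with h1 | h1
    · refine ⟨1, Set.right_mem_Icc.2 zero_le_one, funext fun j => ?_⟩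
      have hj : ρ j = 1 := by
        have h := hE i0 j
        rw [h1] at h
        have : (1 - ρ j) * lam j = 0 := by nlinarith [h]
        rcases mul_eq_zero.1 this with h' | h'
        · linarith
        · exact absurd h' (hlam j).ne'
      simp only [hrdef, hj]
      rw [eq_comm, div_eq_one_iff_eq (by nlinarith [hlam j])]
      ring
    · set D := (1 - ρ i0) * lam i0 + ρ i0 with hD
      have hDpos : 0 < D := by nlinarith [hlam i0]
      have htmem : ρ i0 / D ∈ Set.Icc (0:ℝ) 1 := by
        constructor
        · exact div_nonneg hpos.le hDpos.le
        · rw [div_le_one hDpos]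
          nlinarith [hlam i0]
      refine ⟨ρ i0 / D, htmem, funext fun j => ?_⟩
      have hEj := hE i0 j
      have hdj := hden _ htmem j
      simp only [hrdef]
      rw [eq_div_iff hdj.ne']
      field_simp
      linear_combination -hEj
  -- the inverse map
  set Φ : ℝ → W → ℝ := fun k i =>
    if h : k ∈ Set.Icc (0:ℝ) (n:ℝ) then r ((e.symm ⟨k, h⟩ : Set.Icc (0:ℝ) 1) : ℝ) i else 0
    with hΦdef
  have hΦval : ∀ k (hk : k ∈ Set.Icc (0:ℝ) (n:ℝ)), ∀ i,
      Φ k i = r ((e.symm ⟨k, hk⟩ : Set.Icc (0:ℝ) 1) : ℝ) i := by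
    intro k hk i
    simp only [hΦdef]
    split
    · rfl
    · next h => exact absurd hk h
  have hΦgood : ∀ k ∈ Set.Icc (0:ℝ) (n:ℝ), Φ k ∈ Feq ∧ ∑ i, Φ k i = k := by
    intro k hk
    have h1 : Φ k = r ((e.symm ⟨k, hk⟩ : Set.Icc (0:ℝ) 1) : ℝ) := funext (hΦval k hk)
    rw [h1]
    refine ⟨hrFeq _ (e.symm ⟨k, hk⟩).2, ?_⟩
    exact hge ⟨k, hk⟩
  constructor
  · refine ⟨?_, ?_, ?_⟩
    · intro ρ hρ
      constructor
      · exact Finset.sum_nonneg fun i _ => (hρ.1 i).1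
      · refine le_trans (Finset.sum_le_sum fun i _ => (hρ.1 i).2) ?_
        simp [Finset.card_univ, n]
    · intro ρ hρ σ hσ hsum
      obtain ⟨t, ht, rfl⟩ := hclass ρ hρ
      obtain ⟨s, hs, rfl⟩ := hclass σ hσ
      have : g t = g s := hsum
      have := hgmono.injOn ht hs this
      rw [this]
    · intro k hk
      exact ⟨Φ k, (hΦgood k hk).1, (hΦgood k hk).2⟩
  · refine ⟨Φ, hΦgood, ?_⟩
    intro i
    constructor
    · rw [continuousOn_iff_continuous_restrict]
      have hres : (Set.Icc (0:ℝ) (n:ℝ)).domRestrict (fun k => Φ k i) =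
          fun y : Set.Icc (0:ℝ) (n:ℝ) => r ((e.symm y : Set.Icc (0:ℝ) 1) : ℝ) i := by
        funext y
        show Φ y.1 i = _
        exact hΦval y.1 y.2 i
      rw [hres]
      have hc1 : Continuous fun y : Set.Icc (0:ℝ) (n:ℝ) =>
          ((e.symm y : Set.Icc (0:ℝ) 1) : ℝ) :=
        continuous_subtype_val.comp (OrderIso.continuous e.symm)
      exact (hrcont i).comp_continuous hc1 (fun y => (e.symm y).2)
    · intro k hk k' hk' hkk'
      show Φ k i ≤ Φ k' i
      rw [hΦval k hk i, hΦval k' hk' i]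
      have hle : (e.symm ⟨k, hk⟩ : Set.Icc (0:ℝ) 1) ≤ e.symm ⟨k', hk'⟩ :=
        e.symm.monotone (Subtype.mk_le_mk.2 hkk')
      rcases eq_or_lt_of_le hle with h | h
      · rw [h]
      · exact (hrmono i _ (e.symm ⟨k, hk⟩).2 _ (e.symm ⟨k', hk'⟩).2 h).le
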